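/- Let (Ω, ℱ, ℙ) be a probability space and, for each N ≥ 1, let X^{(N)}_1,...,X^{(N)}_N and δ^{(N)}_1,...,δ^{(N)}_N be real-valued random variables on Ω, and set X̂^{(N)}_i = X^{(N)}_i + δ^{(N)}_i. Suppose the random sequences A_N := (1/N)·Σ_{i=1}^N X^{(N)}_i·δ^{(N)}_i and B_N := (1/N)·Σ_{i=1}^N (X̂^{(N)}_i)² − (1/N)·Σ_{i=1}^N (X^{(N)}_i)² both converge to 0 in probability as N → ∞. Then for every ε > 0, the sample proportion of large deviations P_N := (1/N)·Σ_{i=1}^N 1{|δ^{(N)}_i| > ε} converges to 0 in probability as N → ∞. -/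

import Mathlib

open MeasureTheory Filter

theorem consistency_in_probability
    {Ω : Type*} [MeasurableSpace Ω] (ℙ : Measure Ω) [IsProbabilityMeasure ℙ]
    (X δ : (N : ℕ) → ℕ → Ω → ℝ)
    (hXmeas : ∀ N i, Measurable (X N i)) (hδmeas : ∀ N i, Measurable (δ N i))
    (Xhat : (N : ℕ) → ℕ → Ω → ℝ)
    (hXhat : ∀ N i ω, Xhat N i ω = X N i ω + δ N i ω)
    (hA : ∀ ρ > (0 : ℝ),
      Tendsto (fun N : ℕ =>
        ℙ {ω | |(1 / (N : ℝ)) * ∑ i ∈ Finset.range N, X N i ω * δ N i ω| > ρ})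
        atTop (nhds 0))
    (hB : ∀ ρ > (0 : ℝ),
      Tendsto (fun N : ℕ =>
        ℙ {ω | |(1 / (N : ℝ)) * ∑ i ∈ Finset.range N, (Xhat N i ω) ^ 2 -
                (1 / (N : ℝ)) * ∑ i ∈ Finset.range N, (X N i ω) ^ 2| > ρ})
        atTop (nhds 0)) :
    ∀ ε > (0 : ℝ), ∀ ρ > (0 : ℝ),
      Tendsto (fun N : ℕ =>
        ℙ {ω | |(1 / (N : ℝ)) * ∑ i ∈ Finset.range N,
                  (if |δ N i ω| > ε then (1 : ℝ) else 0)| > ρ})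
        atTop (nhds 0) := by
  intro ε hε ρ hρ
  set c2 : ℝ := ρ * ε ^ 2 / 2 with hc2def
  set c4 : ℝ := ρ * ε ^ 2 / 4 with hc4def
  have hc2 : 0 < c2 := by positivity
  have hc4 : 0 < c4 := by positivity
  have hsub : ∀ N : ℕ,
      {ω | |(1 / (N : ℝ)) * ∑ i ∈ Finset.range N,
              (if |δ N i ω| > ε then (1 : ℝ) else 0)| > ρ}
      ⊆ {ω | |(1 / (N : ℝ)) * ∑ i ∈ Finset.range N, (Xhat N i ω) ^ 2 -
                (1 / (N : ℝ)) * ∑ i ∈ Finset.range N, (X N i ω) ^ 2| > c2}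
        ∪ {ω | |(1 / (N : ℝ)) * ∑ i ∈ Finset.range N, X N i ω * δ N i ω| > c4} := by
    intro N ω hω
    simp only [Set.mem_setOf_eq, Set.mem_union] at hω ⊢
    set a : ℝ := (1 / (N : ℝ)) * ∑ i ∈ Finset.range N, X N i ω * δ N i ω with hadef
    set s : ℝ := (1 / (N : ℝ)) * ∑ i ∈ Finset.range N, (δ N i ω) ^ 2 with hsdef
    set p : ℝ := (1 / (N : ℝ)) * ∑ i ∈ Finset.range N,
        (if |δ N i ω| > ε then (1 : ℝ) else 0) with hpdef
    have hb : (1 / (N : ℝ)) * ∑ i ∈ Finset.range N, (Xhat N i ω) ^ 2 -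
        (1 / (N : ℝ)) * ∑ i ∈ Finset.range N, (X N i ω) ^ 2 = 2 * a + s := by
      have hsum : ∑ i ∈ Finset.range N, (Xhat N i ω) ^ 2
          = ∑ i ∈ Finset.range N, (X N i ω) ^ 2
            + 2 * ∑ i ∈ Finset.range N, X N i ω * δ N i ω
            + ∑ i ∈ Finset.range N, (δ N i ω) ^ 2 := by
        rw [Finset.mul_sum, ← Finset.sum_add_distrib, ← Finset.sum_add_distrib]
        exact Finset.sum_congr rfl fun i _ => by rw [hXhat]; ring
      rw [hsum, hadef, hsdef]; ring
    have hp0 : 0 ≤ p := by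
      apply mul_nonneg (by positivity)
      exact Finset.sum_nonneg fun i _ => by split_ifs <;> norm_num
    have hsp : ε ^ 2 * p ≤ s := by
      have hterm : ∀ i ∈ Finset.range N,
          ε ^ 2 * (if |δ N i ω| > ε then (1 : ℝ) else 0) ≤ (δ N i ω) ^ 2 := by
        intro i _
        split_ifs with h
        · nlinarith [sq_abs (δ N i ω), mul_self_nonneg (|δ N i ω| - ε)]
        · simpa using sq_nonneg (δ N i ω)
      calc ε ^ 2 * p = (1 / (N : ℝ)) * ∑ i ∈ Finset.range N,
            ε ^ 2 * (if |δ N i ω| > ε then (1 : ℝ) else 0) := by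
            simp only [hpdef, Finset.mul_sum]
            exact Finset.sum_congr rfl fun i _ => by ring
        _ ≤ s := by
            rw [hsdef]
            exact mul_le_mul_of_nonneg_left (Finset.sum_le_sum hterm) (by positivity)
    have hpρ : p > ρ := by rwa [abs_of_nonneg hp0] at hω
    have hs : s > ρ * ε ^ 2 := by nlinarith
    by_contra hcon
    push_neg at hcon
    obtain ⟨h1, h2⟩ := hcon
    have hb1 := abs_le.mp h1
    have hb2 := abs_le.mp h2
    rw [hb] at hb1
    rw [hc2def] at hb1
    rw [hc4def] at hb2
    obtain ⟨hb1l, hb1r⟩ := hb1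
    obtain ⟨hb2l, hb2r⟩ := hb2
    linarith
  have hbound : ∀ N : ℕ,
      ℙ {ω | |(1 / (N : ℝ)) * ∑ i ∈ Finset.range N,
              (if |δ N i ω| > ε then (1 : ℝ) else 0)| > ρ}
      ≤ ℙ {ω | |(1 / (N : ℝ)) * ∑ i ∈ Finset.range N, (Xhat N i ω) ^ 2 -
                (1 / (N : ℝ)) * ∑ i ∈ Finset.range N, (X N i ω) ^ 2| > c2}
        + ℙ {ω | |(1 / (N : ℝ)) * ∑ i ∈ Finset.range N, X N i ω * δ N i ω| > c4} :=
    fun N => (measure_mono (hsub N)).trans (measure_union_le _ _)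
  have hlim : Tendsto (fun N : ℕ =>
      ℙ {ω | |(1 / (N : ℝ)) * ∑ i ∈ Finset.range N, (Xhat N i ω) ^ 2 -
                (1 / (N : ℝ)) * ∑ i ∈ Finset.range N, (X N i ω) ^ 2| > c2}
      + ℙ {ω | |(1 / (N : ℝ)) * ∑ i ∈ Finset.range N, X N i ω * δ N i ω| > c4})
      atTop (nhds 0) := by
    simpa using (hB c2 hc2).add (hA c4 hc4)
  exact tendsto_of_tendsto_of_tendsto_of_le_of_le tendsto_const_nhds hlim
    (fun N => zero_le) hbound
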